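/- Let H_1 and H_2 be Hermitian operators, H = H_1 + H_2, and let S_2(t) = e^{-itH_1/2} e^{-itH_2} e^{-itH_1/2} be the Strang splitting. Then for all t ≥ 0, ‖S_2(t) − e^{-itH}‖ ≤ (t³/12)·‖[H_2, [H_2, H_1]]‖ + (t³/24)·‖[H_1, [H_1, H_2]]‖. -/

import Mathlib

open NormedSpace

section Core

variable {𝔸 : Type*} [NormedRing 𝔸] [NormedAlgebra ℝ 𝔸] [CompleteSpace 𝔸]

/-- The one-parameter group `s ↦ exp (s • M)`. -/
noncomputable def egr (M : 𝔸) (s : ℝ) : 𝔸 := exp (s • M)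

lemma egr_zero (M : 𝔸) : egr M 0 = 1 := by simp [egr]

lemma egr_add (M : 𝔸) (u v : ℝ) : egr M (u + v) = egr M u * egr M v := by
  rw [egr, egr, egr, add_smul]
  exact exp_add_of_commute_of_mem_ball (((Commute.refl M).smul_left u).smul_right v)
    ((expSeries_radius_eq_top ℝ 𝔸).symm ▸ edist_lt_top _ _)
    ((expSeries_radius_eq_top ℝ 𝔸).symm ▸ edist_lt_top _ _)

lemma egr_comm (M : 𝔸) (s : ℝ) : M * egr M s = egr M s * M :=
  (((Commute.refl M).smul_right s).exp_right).eq

lemma egr_neg_mul (M : 𝔸) (s : ℝ) : egr M s * egr M (-s) = 1 := by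
  rw [← egr_add]; simp [egr_zero]

lemma egr_neg (M : 𝔸) (s : ℝ) : egr (-M) s = egr M (-s) := by
  simp [egr, smul_neg, neg_smul]

lemma hasDerivAt_egr (M : 𝔸) (s : ℝ) : HasDerivAt (egr M) (M * egr M s) s :=
  hasDerivAt_exp_smul_const' M s

lemma continuous_egr (M : 𝔸) : Continuous (egr M) :=
  continuous_iff_continuousAt.2 fun s => (hasDerivAt_egr M s).continuousAt

lemma hasDerivAt_egr_shift (M : 𝔸) (c s : ℝ) :
    HasDerivAt (fun w => egr M (w - c)) (M * egr M (s - c)) s := by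
  have h := (hasDerivAt_egr M (s - c)).scomp s ((hasDerivAt_id s).sub_const c)
  simpa [Function.comp_def] using h

lemma hasDerivAt_egr_sub (M : 𝔸) (c s : ℝ) :
    HasDerivAt (fun w => egr M (c - w)) (-(M * egr M (c - s))) s := by
  have h := (hasDerivAt_egr M (c - s)).scomp s ((hasDerivAt_id s).const_sub c)
  simpa [Function.comp_def] using h

lemma norm_mul3_le' (x y z : 𝔸) : ‖x * y * z‖ ≤ ‖x‖ * ‖y‖ * ‖z‖ := by
  calc ‖x * y * z‖ ≤ ‖x * y‖ * ‖z‖ := norm_mul_le _ _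
    _ ≤ ‖x‖ * ‖y‖ * ‖z‖ :=
      mul_le_mul_of_nonneg_right (norm_mul_le _ _) (norm_nonneg _)

lemma norm_conj_le {x z : 𝔸} (hx : ‖x‖ ≤ 1) (hz : ‖z‖ ≤ 1) (y : 𝔸) :
    ‖x * y * z‖ ≤ ‖y‖ := by
  calc ‖x * y * z‖ ≤ ‖x‖ * ‖y‖ * ‖z‖ := norm_mul3_le' x y z
    _ ≤ 1 * ‖y‖ * 1 := by
      apply mul_le_mul (mul_le_mul hx le_rfl (norm_nonneg y) zero_le_one) hz
        (norm_nonneg z) (by positivity)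
    _ = ‖y‖ := by ring

/-- Fundamental commutator expansion:
`e^{vM} Z - Z e^{vM} = ∫₀ᵛ e^{wM} [M,Z] e^{(v-w)M} dw`. -/
lemma comm_expand (M Z : 𝔸) (v : ℝ) :
    egr M v * Z - Z * egr M v
      = ∫ w in (0:ℝ)..v, egr M w * (M * Z - Z * M) * egr M (v - w) := by
  have hd : ∀ w : ℝ, HasDerivAt (fun u => egr M u * Z * egr M (v - u))
      (egr M w * (M * Z - Z * M) * egr M (v - w)) w := by
    intro w
    have h3 := ((hasDerivAt_egr M w).mul_const Z).mul (hasDerivAt_egr_sub M v w)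
    convert h3 using 1
    · rfl
    rw [egr_comm M w]
    noncomm_ring
  have hi : IntervalIntegrable (fun w => egr M w * (M * Z - Z * M) * egr M (v - w))
      MeasureTheory.volume 0 v := by
    apply Continuous.intervalIntegrable
    exact ((continuous_egr M).mul continuous_const).mul
      ((continuous_egr M).comp (continuous_const.sub continuous_id))
  rw [intervalIntegral.integral_eq_sub_of_hasDerivAt (fun w _ => hd w) hi]
  simp [egr_zero]

lemma comm_norm_le (M Z : 𝔸) (hM : ∀ u : ℝ, ‖egr M u‖ ≤ 1) {v : ℝ} (hv : 0 ≤ v) :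
    ‖egr M v * Z - Z * egr M v‖ ≤ v * ‖M * Z - Z * M‖ := by
  rw [comm_expand]
  calc ‖∫ w in (0:ℝ)..v, egr M w * (M * Z - Z * M) * egr M (v - w)‖
      ≤ ‖M * Z - Z * M‖ * |v - 0| :=
        intervalIntegral.norm_integral_le_of_norm_le_const
          (fun w _ => norm_conj_le (hM w) (hM (v - w)) _)
    _ = v * ‖M * Z - Z * M‖ := by rw [sub_zero, abs_of_nonneg hv]; ring

/-- Strang splitting. -/
noncomputable def Spl (a B : 𝔸) (s : ℝ) : 𝔸 := egr a s * egr B s * egr a s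

/-- Derivative defect `S'(s) - (a+a+B) S(s)`. -/
noncomputable def Rr (a B : 𝔸) (s : ℝ) : 𝔸 :=
  egr a s * B * egr B s * egr a s + egr a s * egr B s * a * egr a s
    - a * Spl a B s - B * Spl a B s

/-- Conjugated defect. -/
noncomputable def Nn (a B : 𝔸) (s : ℝ) : 𝔸 :=
  B * egr B s + egr B s * a - a * egr B s - egr a (-s) * B * egr a s * egr B s

/-- Commutator `[a,B]`. -/
def Cc (a B : 𝔸) : 𝔸 := a * B - B * a

lemma hasDerivAt_Spl (a B : 𝔸) (s : ℝ) :
    HasDerivAt (Spl a B)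
      (a * Spl a B s + egr a s * B * egr B s * egr a s
        + egr a s * egr B s * a * egr a s) s := by
  have h := ((hasDerivAt_egr a s).mul (hasDerivAt_egr B s)).mul (hasDerivAt_egr a s)
  have he : Spl a B = fun u => egr a u * egr B u * egr a u := rfl
  rw [he]
  convert h using 1
  · rfl
  simp only [Spl, Pi.mul_apply]
  noncomm_ring

lemma continuous_Spl (a B : 𝔸) : Continuous (Spl a B) :=
  ((continuous_egr a).mul (continuous_egr B)).mul (continuous_egr a)

lemma continuous_Rr (a B : 𝔸) : Continuous (Rr a B) := by
  unfold Rr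
  refine Continuous.sub (Continuous.sub (Continuous.add ?_ ?_) ?_) ?_
  · exact (((continuous_egr a).mul continuous_const).mul (continuous_egr B)).mul
      (continuous_egr a)
  · exact (((continuous_egr a).mul (continuous_egr B)).mul continuous_const).mul
      (continuous_egr a)
  · exact continuous_const.mul (continuous_Spl a B)
  · exact continuous_const.mul (continuous_Spl a B)

/-- Duhamel-type representation of the splitting error. -/
lemma duhamel (a B : 𝔸) (t : ℝ) :
    Spl a B t - egr (a + a + B) t
      = ∫ s in (0:ℝ)..t, egr (a + a + B) (t - s) * Rr a B s := by
  have hd : ∀ s : ℝ, HasDerivAt (fun u => egr (a + a + B) (t - u) * Spl a B u)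
      (egr (a + a + B) (t - s) * Rr a B s) s := by
    intro s
    have h3 := (hasDerivAt_egr_sub (a + a + B) t s).mul (hasDerivAt_Spl a B s)
    convert h3 using 1
    · rfl
    simp only [Rr, Spl]
    rw [egr_comm (a + a + B) (t - s)]
    noncomm_ring
  have hi : IntervalIntegrable (fun s => egr (a + a + B) (t - s) * Rr a B s)
      MeasureTheory.volume 0 t := by
    apply Continuous.intervalIntegrable
    exact ((continuous_egr _).comp (continuous_const.sub continuous_id)).mul
      (continuous_Rr a B)
  rw [intervalIntegral.integral_eq_sub_of_hasDerivAt (fun s _ => hd s) hi]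
  simp [Spl, egr_zero]

lemma Rr_eq (a B : 𝔸) (s : ℝ) : Rr a B s = egr a s * Nn a B s * egr a s := by
  have h1 : egr a s * a = a * egr a s := (egr_comm a s).symm
  have h2 : egr a s * egr a (-s) = 1 := egr_neg_mul a s
  have e1 : egr a s * (a * egr B s) * egr a s = a * (egr a s * egr B s * egr a s) := by
    rw [← mul_assoc (egr a s) a (egr B s), h1]; noncomm_ring
  have e2 : egr a s * (egr a (-s) * B * egr a s * egr B s) * egr a s
      = B * (egr a s * egr B s * egr a s) := by
    calc egr a s * (egr a (-s) * B * egr a s * egr B s) * egr a s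
        = (egr a s * egr a (-s)) * (B * (egr a s * egr B s * egr a s)) := by noncomm_ring
      _ = B * (egr a s * egr B s * egr a s) := by rw [h2, one_mul]
  symm
  calc egr a s * Nn a B s * egr a s
      = egr a s * (B * egr B s) * egr a s + egr a s * (egr B s * a) * egr a s
        - egr a s * (a * egr B s) * egr a s
        - egr a s * (egr a (-s) * B * egr a s * egr B s) * egr a s := by
          simp only [Nn]; noncomm_ring
    _ = Rr a B s := by rw [e1, e2]; simp only [Rr, Spl]; noncomm_ring

lemma Nn_eq (a B : 𝔸) (s : ℝ) :
    Nn a B s = ∫ w in (0:ℝ)..s,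
      (egr a (w - s) * Cc a B * egr a (s - w) * egr B s
        - egr B w * Cc a B * egr B (s - w)) := by
  have hd : ∀ w : ℝ, HasDerivAt
      (fun w => egr a (w - s) * B * egr a (s - w) * egr B s + egr B w * a * egr B (s - w))
      (egr a (w - s) * Cc a B * egr a (s - w) * egr B s
        - egr B w * Cc a B * egr B (s - w)) w := by
    intro w
    have p1 := (((hasDerivAt_egr_shift a s w).mul_const B).mul
      (hasDerivAt_egr_sub a s w)).mul_const (egr B s)
    have p2 := ((hasDerivAt_egr B w).mul_const a).mul (hasDerivAt_egr_sub B s w)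
    have h3 := p1.add p2
    convert h3 using 1
    · rfl
    · rfl
    simp only [Cc]
    rw [egr_comm a (w - s), egr_comm B w]
    noncomm_ring
  have hi : IntervalIntegrable (fun w =>
      egr a (w - s) * Cc a B * egr a (s - w) * egr B s
        - egr B w * Cc a B * egr B (s - w)) MeasureTheory.volume 0 s := by
    apply Continuous.intervalIntegrable
    refine Continuous.sub ?_ ?_
    · exact ((((continuous_egr a).comp (continuous_id.sub continuous_const)).mul
        continuous_const).mul
          ((continuous_egr a).comp (continuous_const.sub continuous_id))).mul
        continuous_const
    · exact ((continuous_egr B).mul continuous_const).mul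
        ((continuous_egr B).comp (continuous_const.sub continuous_id))
  rw [intervalIntegral.integral_eq_sub_of_hasDerivAt (fun w _ => hd w) hi]
  simp only [sub_self, zero_sub, sub_zero, egr_zero, one_mul, mul_one, Nn]
  noncomm_ring

lemma Nn_bound (a B : 𝔸) (ha : ∀ u : ℝ, ‖egr a u‖ ≤ 1) (hb : ∀ u : ℝ, ‖egr B u‖ ≤ 1)
    {s : ℝ} (hs : 0 ≤ s) :
    ‖Nn a B s‖ ≤ s ^ 2 / 2 * (‖a * Cc a B - Cc a B * a‖ + ‖B * Cc a B - Cc a B * B‖) := by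
  set K₁ := ‖a * Cc a B - Cc a B * a‖ with hK₁
  set K₂ := ‖B * Cc a B - Cc a B * B‖ with hK₂
  have hK₁0 : 0 ≤ K₁ := norm_nonneg _
  have hK₂0 : 0 ≤ K₂ := norm_nonneg _
  rw [Nn_eq]
  have hbnd : ∀ w ∈ Set.uIoc (0:ℝ) s,
      ‖egr a (w - s) * Cc a B * egr a (s - w) * egr B s
        - egr B w * Cc a B * egr B (s - w)‖ ≤ (s - w) * K₁ + w * K₂ := by
    intro w hw
    rw [Set.uIoc_of_le hs] at hw
    obtain ⟨hw0, hws⟩ := hw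
    have hxx : egr a (w - s) * egr a (s - w) = 1 := by
      rw [← egr_add]
      have : w - s + (s - w) = 0 := by ring
      rw [this, egr_zero]
    have hyy : egr B w * egr B (s - w) = egr B s := by
      rw [← egr_add]
      congr 1; ring
    have hα : egr a (w - s) * Cc a B * egr a (s - w) * egr B s - Cc a B * egr B s
        = (egr a (w - s) * Cc a B - Cc a B * egr a (w - s)) * (egr a (s - w) * egr B s) := by
      have expand : (egr a (w - s) * Cc a B - Cc a B * egr a (w - s))
            * (egr a (s - w) * egr B s)
          = egr a (w - s) * Cc a B * egr a (s - w) * egr B s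
            - Cc a B * (egr a (w - s) * egr a (s - w)) * egr B s := by noncomm_ring
      rw [expand, hxx, mul_one]
    have hβ : Cc a B * egr B s - egr B w * Cc a B * egr B (s - w)
        = (Cc a B * egr B w - egr B w * Cc a B) * egr B (s - w) := by
      have expand : (Cc a B * egr B w - egr B w * Cc a B) * egr B (s - w)
          = Cc a B * (egr B w * egr B (s - w)) - egr B w * Cc a B * egr B (s - w) := by
        noncomm_ring
      rw [expand, hyy]
    have hαn : ‖egr a (w - s) * Cc a B * egr a (s - w) * egr B s - Cc a B * egr B s‖
        ≤ (s - w) * K₁ := by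
      rw [hα]
      have hcomm : ‖egr a (w - s) * Cc a B - Cc a B * egr a (w - s)‖ ≤ (s - w) * K₁ := by
        have h := comm_norm_le (-a) (Cc a B)
          (fun u => by rw [egr_neg]; exact ha (-u)) (sub_nonneg.2 hws)
        rw [egr_neg] at h
        have harg : -(s - w) = w - s := by ring
        rw [harg] at h
        have hnrm : ‖-a * Cc a B - Cc a B * -a‖ = K₁ := by
          have : -a * Cc a B - Cc a B * -a = -(a * Cc a B - Cc a B * a) := by noncomm_ring
          rw [this, norm_neg]
        rw [hnrm] at h
        exact h
      calc ‖(egr a (w - s) * Cc a B - Cc a B * egr a (w - s)) * (egr a (s - w) * egr B s)‖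
          ≤ ‖egr a (w - s) * Cc a B - Cc a B * egr a (w - s)‖ * ‖egr a (s - w) * egr B s‖ :=
            norm_mul_le _ _
        _ ≤ (s - w) * K₁ := by
            have h1 : ‖egr a (s - w) * egr B s‖ ≤ 1 := by
              calc ‖egr a (s - w) * egr B s‖ ≤ ‖egr a (s - w)‖ * ‖egr B s‖ := norm_mul_le _ _
                _ ≤ 1 := by nlinarith [ha (s - w), hb s, norm_nonneg (egr a (s - w)),
                    norm_nonneg (egr B s)]
            nlinarith [norm_nonneg (egr a (w - s) * Cc a B - Cc a B * egr a (w - s)),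
              sub_nonneg.2 hws, hcomm]
    have hβn : ‖Cc a B * egr B s - egr B w * Cc a B * egr B (s - w)‖ ≤ w * K₂ := by
      rw [hβ]
      have hcomm : ‖Cc a B * egr B w - egr B w * Cc a B‖ ≤ w * K₂ := by
        have h := comm_norm_le B (Cc a B) hb hw0.le
        rw [norm_sub_rev] at h
        exact h
      calc ‖(Cc a B * egr B w - egr B w * Cc a B) * egr B (s - w)‖
          ≤ ‖Cc a B * egr B w - egr B w * Cc a B‖ * ‖egr B (s - w)‖ := norm_mul_le _ _
        _ ≤ w * K₂ := by
            nlinarith [hb (s - w), norm_nonneg (Cc a B * egr B w - egr B w * Cc a B),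
              norm_nonneg (egr B (s - w)), hw0.le, hcomm]
    calc ‖egr a (w - s) * Cc a B * egr a (s - w) * egr B s - egr B w * Cc a B * egr B (s - w)‖
        = ‖(egr a (w - s) * Cc a B * egr a (s - w) * egr B s - Cc a B * egr B s)
            + (Cc a B * egr B s - egr B w * Cc a B * egr B (s - w))‖ :=
          (congrArg norm (sub_add_sub_cancel _ _ _)).symm
      _ ≤ ‖egr a (w - s) * Cc a B * egr a (s - w) * egr B s - Cc a B * egr B s‖
            + ‖Cc a B * egr B s - egr B w * Cc a B * egr B (s - w)‖ := norm_add_le _ _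
      _ ≤ (s - w) * K₁ + w * K₂ := add_le_add hαn hβn
  have hgint : IntervalIntegrable (fun w => (s - w) * K₁ + w * K₂)
      MeasureTheory.volume 0 s := by
    apply Continuous.intervalIntegrable
    exact ((continuous_const.sub continuous_id).mul continuous_const).add
      (continuous_id.mul continuous_const)
  have hle := intervalIntegral.norm_integral_le_abs_of_norm_le
    (μ := MeasureTheory.volume) (a := (0:ℝ)) (b := s)
    ((MeasureTheory.ae_restrict_mem measurableSet_uIoc).mono hbnd) hgint
  have hval : (∫ w in (0:ℝ)..s, ((s - w) * K₁ + w * K₂)) = s ^ 2 / 2 * (K₁ + K₂) := by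
    have hcong : Set.EqOn (fun w => (s - w) * K₁ + w * K₂)
        (fun w => (K₂ - K₁) * w + s * K₁) (Set.uIcc 0 s) := fun w _ => by ring
    rw [intervalIntegral.integral_congr hcong,
      intervalIntegral.integral_add
        (Continuous.intervalIntegrable (by fun_prop : Continuous fun w : ℝ => (K₂ - K₁) * w) 0 s)
        (intervalIntegrable_const),
      intervalIntegral.integral_const_mul, integral_id, intervalIntegral.integral_const]
    simp only [smul_eq_mul, sub_zero]
    ring
  rw [hval] at hle
  have habs : |s ^ 2 / 2 * (K₁ + K₂)| = s ^ 2 / 2 * (K₁ + K₂) := by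
    apply abs_of_nonneg; positivity
  rw [habs] at hle
  exact hle

/-- Core Strang splitting bound in an arbitrary real Banach algebra, assuming
the three one-parameter groups consist of contractions. -/
lemma strang_core (a B : 𝔸)
    (ha : ∀ u : ℝ, ‖egr a u‖ ≤ 1) (hb : ∀ u : ℝ, ‖egr B u‖ ≤ 1)
    (hab : ∀ u : ℝ, ‖egr (a + a + B) u‖ ≤ 1) {t : ℝ} (ht : 0 ≤ t) :
    ‖Spl a B t - egr (a + a + B) t‖
      ≤ t ^ 3 / 6 * (‖a * Cc a B - Cc a B * a‖ + ‖B * Cc a B - Cc a B * B‖) := by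
  set K := ‖a * Cc a B - Cc a B * a‖ + ‖B * Cc a B - Cc a B * B‖ with hK
  have hK0 : 0 ≤ K := by positivity
  rw [duhamel]
  have hbnd : ∀ s ∈ Set.uIoc (0:ℝ) t,
      ‖egr (a + a + B) (t - s) * Rr a B s‖ ≤ s ^ 2 * (K / 2) := by
    intro s hs
    rw [Set.uIoc_of_le ht] at hs
    obtain ⟨hs0, hst⟩ := hs
    have h1 : ‖egr (a + a + B) (t - s) * Rr a B s‖ ≤ ‖Rr a B s‖ := by
      calc ‖egr (a + a + B) (t - s) * Rr a B s‖
          ≤ ‖egr (a + a + B) (t - s)‖ * ‖Rr a B s‖ := norm_mul_le _ _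
        _ ≤ ‖Rr a B s‖ := by
            nlinarith [hab (t - s), norm_nonneg (Rr a B s),
              norm_nonneg (egr (a + a + B) (t - s))]
    have h2 : ‖Rr a B s‖ ≤ ‖Nn a B s‖ := by
      rw [Rr_eq]
      exact norm_conj_le (ha s) (ha s) _
    have h3 := Nn_bound a B ha hb hs0.le
    calc ‖egr (a + a + B) (t - s) * Rr a B s‖ ≤ ‖Rr a B s‖ := h1
      _ ≤ ‖Nn a B s‖ := h2
      _ ≤ s ^ 2 / 2 * K := h3
      _ = s ^ 2 * (K / 2) := by ring
  have hgint : IntervalIntegrable (fun s : ℝ => s ^ 2 * (K / 2))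
      MeasureTheory.volume 0 t :=
    ((continuous_pow 2).mul continuous_const).intervalIntegrable 0 t
  have hle := intervalIntegral.norm_integral_le_abs_of_norm_le
    (μ := MeasureTheory.volume) (a := (0:ℝ)) (b := t)
    ((MeasureTheory.ae_restrict_mem measurableSet_uIoc).mono hbnd) hgint
  have hval : (∫ s in (0:ℝ)..t, s ^ 2 * (K / 2)) = t ^ 3 / 6 * K := by
    rw [intervalIntegral.integral_mul_const, integral_pow]
    norm_num
    ring
  rw [hval] at hle
  have habs : |t ^ 3 / 6 * K| = t ^ 3 / 6 * K := by
    apply abs_of_nonneg; positivity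
  rw [habs] at hle
  exact hle

end Core

section Unitary

variable {E : Type*} [NormedAddCommGroup E] [InnerProductSpace ℂ E] [CompleteSpace E]

/-- Exponential of a skew-adjoint operator is a contraction. -/
lemma norm_exp_skew_le (K : E →L[ℂ] E) (hK : star K = -K) : ‖exp K‖ ≤ 1 := by
  have hstar : star (exp K) = exp (-K) := by rw [star_exp, hK]
  have hmul : star (exp K) * exp K = 1 := by
    rw [hstar, ← exp_add_of_commute_of_mem_ball (𝕂 := ℂ) (Commute.refl K).neg_left
      ((expSeries_radius_eq_top ℂ (E →L[ℂ] E)).symm ▸ edist_lt_top _ _)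
      ((expSeries_radius_eq_top ℂ (E →L[ℂ] E)).symm ▸ edist_lt_top _ _), neg_add_cancel, exp_zero]
  refine ContinuousLinearMap.opNorm_le_bound _ zero_le_one fun x => ?_
  rw [one_mul]
  have hinner : inner ℂ (exp K x) (exp K x) = (inner ℂ x x : ℂ) := by
    calc (inner ℂ (exp K x) (exp K x) : ℂ)
        = inner ℂ ((ContinuousLinearMap.adjoint (exp K)) (exp K x)) x :=
          (ContinuousLinearMap.adjoint_inner_left (exp K) x (exp K x)).symm
      _ = inner ℂ x x := by
          have : (ContinuousLinearMap.adjoint (exp K)) (exp K x)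
              = (star (exp K) * exp K) x := by
            rw [ContinuousLinearMap.star_eq_adjoint]; rfl
          rw [this, hmul, ContinuousLinearMap.one_apply]
  have hsq : ‖exp K x‖ ^ 2 = ‖x‖ ^ 2 := by
    rw [← inner_self_eq_norm_sq (𝕜 := ℂ), ← inner_self_eq_norm_sq (𝕜 := ℂ), hinner]
  nlinarith [norm_nonneg (exp K x), norm_nonneg x]

end Unitary

/-- **Tight Trotter error bound for the Strang splitting with two Hermitian terms.**
For Hermitian operators `H₁, H₂` on a finite-dimensional complex Hilbert space,
`H = H₁ + H₂` and the Strang splitting `S₂(t) = e^{-itH₁/2} e^{-itH₂} e^{-itH₁/2}`,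
one has `‖S₂(t) − e^{-itH}‖ ≤ (t³/12)‖[H₂,[H₂,H₁]]‖ + (t³/24)‖[H₁,[H₁,H₂]]‖` for all `t ≥ 0`. -/
theorem strang_error_bound_two_terms
    {E : Type*} [NormedAddCommGroup E] [InnerProductSpace ℂ E] [FiniteDimensional ℂ E]
    (H₁ H₂ : E →L[ℂ] E) (hH₁ : IsSelfAdjoint H₁) (hH₂ : IsSelfAdjoint H₂)
    (H : E →L[ℂ] E) (hH : H = H₁ + H₂) :
    ∀ t : ℝ, 0 ≤ t →
      ‖exp ((-(Complex.I * t) / 2) • H₁) * exp ((-(Complex.I * t)) • H₂) *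
          exp ((-(Complex.I * t) / 2) • H₁) - exp ((-(Complex.I * t)) • H)‖
        ≤ t ^ 3 / 12 * ‖⁅H₂, ⁅H₂, H₁⁆⁆‖ + t ^ 3 / 24 * ‖⁅H₁, ⁅H₁, H₂⁆⁆‖ := by
  intro t ht
  set a : E →L[ℂ] E := (-(Complex.I) / 2) • H₁ with ha_def
  set B : E →L[ℂ] E := (-Complex.I) • H₂ with hB_def
  -- a skew-type contraction lemma helper
  have hconv : ∀ (z : ℂ) (T : E →L[ℂ] E) (u : ℝ),
      egr (z • T) u = exp (((u : ℂ) * z) • T) := by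
    intro z T u
    rw [egr]
    congr 1
    rw [← algebraMap_smul ℂ u (z • T), smul_smul]
    norm_num
  have hskew : ∀ (T : E →L[ℂ] E), IsSelfAdjoint T → ∀ (z : ℂ), (starRingEnd ℂ) z = -z →
      ∀ u : ℝ, ‖egr (z • T) u‖ ≤ 1 := by
    intro T hT z hz u
    rw [hconv]
    apply norm_exp_skew_le
    rw [star_smul, hT.star_eq]
    have hs2 : star ((u:ℂ) * z) = -((u:ℂ) * z) := by
      rw [Complex.star_def, map_mul, Complex.conj_ofReal, hz]
      ring
    rw [hs2, neg_smul]
  have ha : ∀ u : ℝ, ‖egr a u‖ ≤ 1 := by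
    rw [ha_def]
    exact hskew H₁ hH₁ (-Complex.I / 2) (by rw [map_div₀, map_neg, Complex.conj_I, map_ofNat]; ring)
  have hb : ∀ u : ℝ, ‖egr B u‖ ≤ 1 := by
    rw [hB_def]
    exact hskew H₂ hH₂ (-Complex.I) (by simp)
  have haab : a + a + B = (-Complex.I) • (H₁ + H₂) := by
    rw [ha_def, hB_def, smul_add, ← add_smul]
    norm_num
  have hab : ∀ u : ℝ, ‖egr (a + a + B) u‖ ≤ 1 := by
    rw [haab]
    exact hskew (H₁ + H₂) (hH₁.add hH₂) (-Complex.I) (by simp)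
  have hcore := strang_core a B ha hb hab ht
  -- rewrite the goal's exponentials into `egr` form
  have e1 : exp ((-(Complex.I * t) / 2) • H₁) = egr a t := by
    rw [ha_def, hconv]
    congr 1
    rw [show ((t : ℂ) * (-Complex.I / 2)) = -(Complex.I * t) / 2 by ring]
  have e2 : exp ((-(Complex.I * t)) • H₂) = egr B t := by
    rw [hB_def, hconv]
    congr 1
    rw [show ((t : ℂ) * (-Complex.I)) = -(Complex.I * t) by ring]
  have e3 : exp ((-(Complex.I * t)) • H) = egr (a + a + B) t := by
    rw [haab, hconv, hH]
    congr 1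
    rw [show ((t : ℂ) * (-Complex.I)) = -(Complex.I * t) by ring]
  rw [e1, e2, e3]
  have eS : egr a t * egr B t * egr a t = Spl a B t := rfl
  rw [eS]
  -- compute the commutator norms
  have hCc : Cc a B = (-(1/2) : ℂ) • (⁅H₁, H₂⁆ : E →L[ℂ] E) := by
    simp only [Cc, ha_def, hB_def, Ring.lie_def]
    rw [smul_mul_smul, smul_mul_smul, smul_sub]
    have c1 : (-Complex.I / 2) * (-Complex.I) = (-(1/2) : ℂ) := by
      rw [show (-Complex.I / 2) * (-Complex.I) = Complex.I * Complex.I / 2 by ring,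
        Complex.I_mul_I]
      norm_num
    have c2 : (-Complex.I) * (-Complex.I / 2) = (-(1/2) : ℂ) := by
      rw [show (-Complex.I) * (-Complex.I / 2) = Complex.I * Complex.I / 2 by ring,
        Complex.I_mul_I]
      norm_num
    rw [c1, c2]
  have hK1 : ‖a * Cc a B - Cc a B * a‖ = 1 / 4 * ‖(⁅H₁, ⁅H₁, H₂⁆⁆ : E →L[ℂ] E)‖ := by
    have key : a * Cc a B - Cc a B * a
        = (Complex.I / 4) • (⁅H₁, ⁅H₁, H₂⁆⁆ : E →L[ℂ] E) := by
      rw [hCc, ha_def, smul_mul_smul, smul_mul_smul,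
        Ring.lie_def H₁ (⁅H₁, H₂⁆ : E →L[ℂ] E), smul_sub]
      congr 1
      · congr 1
        rw [show (-Complex.I / 2) * (-(1/2) : ℂ) = Complex.I / 4 by ring]
      · congr 1
        rw [show ((-(1/2) : ℂ)) * (-Complex.I / 2) = Complex.I / 4 by ring]
    rw [key, norm_smul (Complex.I / 4) (⁅H₁, ⁅H₁, H₂⁆⁆ : E →L[ℂ] E)]
    congr 1
    simp [norm_div, Complex.norm_I]
  have hK2 : ‖B * Cc a B - Cc a B * B‖ = 1 / 2 * ‖(⁅H₂, ⁅H₂, H₁⁆⁆ : E →L[ℂ] E)‖ := by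
    have key : B * Cc a B - Cc a B * B
        = (Complex.I / 2) • (⁅H₂, ⁅H₁, H₂⁆⁆ : E →L[ℂ] E) := by
      rw [hCc, hB_def, smul_mul_smul, smul_mul_smul,
        Ring.lie_def H₂ (⁅H₁, H₂⁆ : E →L[ℂ] E), smul_sub]
      congr 1
      · congr 1
        rw [show (-Complex.I) * (-(1/2) : ℂ) = Complex.I / 2 by ring]
      · congr 1
        rw [show ((-(1/2) : ℂ)) * (-Complex.I) = Complex.I / 2 by ring]
    have flip : (⁅H₂, ⁅H₁, H₂⁆⁆ : E →L[ℂ] E) = -(⁅H₂, ⁅H₂, H₁⁆⁆ : E →L[ℂ] E) := by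
      simp only [Ring.lie_def]; noncomm_ring
    rw [key, flip, smul_neg, norm_neg,
      norm_smul (Complex.I / 2) (⁅H₂, ⁅H₂, H₁⁆⁆ : E →L[ℂ] E)]
    congr 1
    simp [norm_div, Complex.norm_I]
  calc ‖Spl a B t - egr (a + a + B) t‖
      ≤ t ^ 3 / 6 * (‖a * Cc a B - Cc a B * a‖ + ‖B * Cc a B - Cc a B * B‖) := hcore
    _ = t ^ 3 / 12 * ‖(⁅H₂, ⁅H₂, H₁⁆⁆ : E →L[ℂ] E)‖
        + t ^ 3 / 24 * ‖(⁅H₁, ⁅H₁, H₂⁆⁆ : E →L[ℂ] E)‖ := by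
      rw [hK1, hK2]; ring
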